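/- Let G be a finite group and k a field whose multiplicative group k* has order at least 2|G|. Then for every nonempty subset S ⊆ G there exists a function f : G → k such that (1) supp(f) = {g ∈ G : f(g) ≠ 0} equals S, (2) the restriction of f to S is injective, and (3) the Cayley evolution algebra Cay(f) is regular, i.e., its structure matrix — the G × G matrix with (h, g) entry f(g⁻¹h) — is invertible. -/

import Mathlib

open scoped BigOperators

variable {k : Type*} [Field k] {G : Type*} [Group G] [Fintype G] [DecidableEq G]

/-- The Cayley evolution product on the group algebra `k[G]` (realized as `G → k`):
it is the `k`-bilinear product with `δ_g · δ_g = ∑ h, f (g⁻¹ * h) • δ_h` and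
`δ_g · δ_{g'} = 0` for `g ≠ g'`. -/
def cayMul (f : G → k) (x y : G → k) : G → k :=
  fun h => ∑ g : G, x g * y g * f (g⁻¹ * h)

/-- The automorphism group of the Cayley evolution algebra `Cay(f)`: the `k`-linear
bijections of `k[G]` preserving the Cayley evolution product. -/
def cayAut (f : G → k) : Subgroup ((G → k) ≃ₗ[k] (G → k)) where
  carrier := {φ | ∀ x y, φ (cayMul f x y) = cayMul f (φ x) (φ y)}
  one_mem' := fun _ _ => rfl
  mul_mem' := by
    intro a b ha hb x y
    replace ha : ∀ x y, a (cayMul f x y) = cayMul f (a x) (a y) := ha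
    replace hb : ∀ x y, b (cayMul f x y) = cayMul f (b x) (b y) := hb
    show a (b (cayMul f x y)) = cayMul f (a (b x)) (a (b y))
    rw [hb, ha]
  inv_mem' := by
    intro a ha x y
    replace ha : ∀ x y, a (cayMul f x y) = cayMul f (a x) (a y) := ha
    show a.symm (cayMul f x y) = cayMul f (a.symm x) (a.symm y)
    apply a.injective
    rw [ha, a.apply_symm_apply, a.apply_symm_apply, a.apply_symm_apply]

/-- `Cay(f)` is simple: the product is not identically zero and the only ideals
(`k`-subspaces `I` with `k[G] · I ⊆ I`) are `0` and `k[G]`. -/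
def CaySimple (f : G → k) : Prop :=
  (∃ x y : G → k, cayMul f x y ≠ 0) ∧
  ∀ I : Submodule k (G → k), (∀ x y : G → k, y ∈ I → cayMul f x y ∈ I) → I = ⊥ ∨ I = ⊤

/-- The structure matrix of `Cay(f)`: its `(h, g)` entry is `f (g⁻¹ * h)`. -/
def structMatrix (f : G → k) : Matrix G G k := Matrix.of fun h g => f (g⁻¹ * h)

open Polynomial in
lemma aux_det_poly {k : Type*} [Field k] {G : Type*} [Fintype G] [DecidableEq G]
    (P N : Matrix G G k) (hP : IsUnit P.det) :
    ((X : k[X]) • P.map C + N.map C).det = C P.det * (-(P⁻¹ * N)).charpoly := by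
  have key : (X : k[X]) • P.map C + N.map C = P.map C * Matrix.charmatrix (-(P⁻¹ * N)) := by
    rw [Matrix.charmatrix, mul_sub]
    have h1 : P.map C * Matrix.scalar G (X : k[X]) = (X : k[X]) • P.map C := by
      rw [← (Matrix.scalar_commute (X : k[X]) (Commute.all X) (P.map C)).eq,
        Matrix.scalar_apply, ← Matrix.smul_eq_diagonal_mul]
    have h2 : P.map C * (C : k →+* k[X]).mapMatrix (-(P⁻¹ * N)) = -(N.map C) := by
      rw [map_neg, RingHom.mapMatrix_apply, mul_neg,
        ← Matrix.map_mul, ← Matrix.mul_assoc, Matrix.mul_nonsing_inv _ hP, Matrix.one_mul]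
    rw [h1, h2, sub_neg_eq_add]
  rw [key, Matrix.det_mul, Matrix.charpoly, ← RingHom.mapMatrix_apply, ← RingHom.map_det]

theorem exists_regular_function {G : Type*} [Group G] [Fintype G] [DecidableEq G]
    {k : Type*} [Field k]
    (hk : 2 * (Fintype.card G : Cardinal) ≤ Cardinal.mk kˣ)
    (S : Set G) (hS : S.Nonempty) :
    ∃ f : G → k, {g : G | f g ≠ 0} = S ∧ Set.InjOn f S ∧ IsUnit (structMatrix f) := by
  classical
  obtain ⟨s0, hs0⟩ := hS
  set n := Fintype.card G with hn_def
  have hn : 1 ≤ n := Fintype.card_pos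
  -- an embedding of G into the units of k
  obtain ⟨e⟩ : Nonempty (G ↪ kˣ) := by
    rw [← Cardinal.lift_mk_le']
    have h1 : Cardinal.lift.{_} (Cardinal.mk G) = ((n : ℕ) : Cardinal) := by
      simp [Cardinal.mk_fintype, hn_def]
    rw [h1]
    calc ((n : ℕ) : Cardinal) = 1 * n := (one_mul _).symm
      _ ≤ 2 * n := by gcongr; exact one_le_two
      _ ≤ Cardinal.lift (Cardinal.mk kˣ) := by
          have := Cardinal.lift_le.mpr hk
          simpa using this
  -- the matrices
  set σ : Equiv.Perm G := Equiv.mulRight s0⁻¹ with hσ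
  set P : Matrix G G k := σ.permMatrix k with hP_def
  have hPdet : IsUnit P.det := by
    rw [hP_def, Matrix.det_permutation]
    exact (Int.isUnit_iff.mpr (by rcases Int.units_eq_one_or (Equiv.Perm.sign σ) with h | h <;>
      simp [h])).map (Int.castRingHom k)
  set f₀ : G → k := fun g => if g ∈ S ∧ g ≠ s0 then (e g : k) else 0 with hf₀
  set N : Matrix G G k := Matrix.of fun h g => f₀ (g⁻¹ * h) with hN
  set p : Polynomial k :=
    ((Polynomial.X : Polynomial k) • P.map Polynomial.C + N.map Polynomial.C).det with hp_def
  have hp : p = Polynomial.C P.det * (-(P⁻¹ * N)).charpoly := aux_det_poly P N hPdet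
  have hPdet0 : P.det ≠ 0 := hPdet.ne_zero
  have hp0 : p ≠ 0 := by
    rw [hp]
    exact mul_ne_zero (by simpa using hPdet0) (Matrix.charpoly_monic _).ne_zero
  have hdeg : p.natDegree = n := by
    rw [hp, Polynomial.natDegree_C_mul hPdet0, Matrix.charpoly_natDegree_eq_dim]
  -- choose t avoiding a finite bad set
  set T : Finset G := Finset.univ.filter (fun g => g ∈ S ∧ g ≠ s0) with hT
  have hTcard : T.card ≤ n - 1 := by
    have : T ⊆ Finset.univ.erase s0 := by
      intro g hg
      rw [hT, Finset.mem_filter] at hg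
      exact Finset.mem_erase.mpr ⟨hg.2.2, Finset.mem_univ g⟩
    calc T.card ≤ (Finset.univ.erase s0).card := Finset.card_le_card this
      _ = n - 1 := by rw [Finset.card_erase_of_mem (Finset.mem_univ s0), Finset.card_univ]
  set A : Finset k := p.roots.toFinset ∪ {0} ∪ T.image (fun g => (e g : k)) with hA_def
  have hAcard : A.card ≤ 2 * n := by
    calc A.card ≤ (p.roots.toFinset ∪ {0}).card + (T.image (fun g => (e g : k))).card :=
        Finset.card_union_le _ _
      _ ≤ (p.roots.toFinset.card + ({0} : Finset k).card) + T.card := by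
          gcongr
          exacts [Finset.card_union_le _ _, Finset.card_image_le]
      _ ≤ (n + 1) + (n - 1) := by
          have h1 : p.roots.toFinset.card ≤ n :=
            (Multiset.toFinset_card_le _).trans ((p.card_roots').trans_eq hdeg)
          exact add_le_add (add_le_add h1 (by simp)) hTcard
      _ ≤ 2 * n := by omega
  obtain ⟨t, ht⟩ : ∃ t : k, t ∉ A := by
    by_contra hcon
    push_neg at hcon
    have h1 : Cardinal.mk k ≤ A.card := by
      have : Cardinal.mk k ≤ Cardinal.mk A :=
        Cardinal.mk_le_of_injective (f := fun t => (⟨t, hcon t⟩ : A)) fun a b h => by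
          simpa using h
      simpa [Cardinal.mk_coe_finset] using this
    have h2 : (2 * n + 1 : Cardinal) ≤ Cardinal.mk k := by
      have emb : (Option kˣ) ↪ k :=
        ⟨fun o => o.elim 0 (fun u => (u : k)), by
          rintro (_ | a) (_ | b) h
          · rfl
          · exact absurd h.symm (Units.ne_zero b)
          · exact absurd h (Units.ne_zero a)
          · exact congrArg some (Units.ext h)⟩
      calc (2 * n + 1 : Cardinal) ≤ Cardinal.mk kˣ + 1 := add_le_add_left hk 1
        _ = Cardinal.mk (Option kˣ) := (Cardinal.mk_option).symm
        _ ≤ Cardinal.mk k := Cardinal.mk_le_of_injective emb.injective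
    have hle : (2 * n + 1 : ℕ) ≤ A.card := by exact_mod_cast h2.trans h1
    omega
  rw [hA_def, Finset.mem_union, Finset.mem_union, not_or, not_or] at ht
  obtain ⟨⟨htroot, ht0⟩, htim⟩ := ht
  have ht0' : t ≠ 0 := by simpa using ht0
  have htim' : ∀ g ∈ S, g ≠ s0 → t ≠ (e g : k) := by
    intro g hg hgs0 h
    exact htim (Finset.mem_image.mpr ⟨g, by simp [hT, hg, hgs0], h.symm⟩)
  -- the function
  refine ⟨fun g => if g = s0 then t else f₀ g, ?_, ?_, ?_⟩
  · ext g
    simp only [Set.mem_setOf_eq, hf₀]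
    by_cases hgs : g = s0
    · simp [hgs, ht0', hs0]
    · by_cases hgS : g ∈ S <;> simp [hgs, hgS, Units.ne_zero]
  · intro a ha b hb hab
    simp only at hab
    by_cases has : a = s0 <;> by_cases hbs : b = s0
    · rw [has, hbs]
    · rw [if_pos has, if_neg hbs, hf₀] at hab
      simp only [hb, hbs, ne_eq, not_false_iff, and_true, if_true] at hab
      exact absurd hab (htim' b hb hbs)
    · rw [if_neg has, if_pos hbs, hf₀] at hab
      simp only [ha, has, ne_eq, not_false_iff, and_true, if_true] at hab
      exact absurd hab.symm (htim' a ha has)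
    · rw [if_neg has, if_neg hbs, hf₀] at hab
      simp only [ha, hb, has, hbs, ne_eq, not_false_iff, and_true, if_true] at hab
      exact e.injective (Units.ext (by exact_mod_cast hab))
  · -- regularity
    have hM : structMatrix (fun g => if g = s0 then t else f₀ g) = t • P + N := by
      ext h g
      have hiff : σ h = g ↔ g⁻¹ * h = s0 := by
        simp only [hσ, Equiv.coe_mulRight, mul_inv_eq_iff_eq_mul, inv_mul_eq_iff_eq_mul]
      by_cases hc : g⁻¹ * h = s0
      · have hσh : σ h = g := hiff.mpr hc
        simp [structMatrix, hN, hP_def, Equiv.Perm.permMatrix, PEquiv.toMatrix_apply,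
          Equiv.toPEquiv_apply, hc, hσh, hf₀, Matrix.add_apply, Matrix.smul_apply]
      · have hσh : ¬ σ h = g := fun hh => hc (hiff.mp hh)
        simp [structMatrix, hN, hP_def, Equiv.Perm.permMatrix, PEquiv.toMatrix_apply,
          Equiv.toPEquiv_apply, hc, hσh, hf₀, Matrix.add_apply, Matrix.smul_apply]
    rw [hM, Matrix.isUnit_iff_isUnit_det, isUnit_iff_ne_zero]
    have heval : Polynomial.eval t p = (t • P + N).det := by
      rw [hp_def, ← Polynomial.coe_evalRingHom, RingHom.map_det]
      congr 1
      ext h g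
      simp [Matrix.map_apply, Matrix.add_apply, Matrix.smul_apply, smul_eq_mul]
      ring
    rw [← heval]
    intro hzero
    exact htroot (Multiset.mem_toFinset.mpr (Polynomial.mem_roots'.mpr ⟨hp0, hzero⟩))
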